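/- Assume the process type Proc is nonempty. Let L_S be a language over Σ such that every word in L_S is sequential and quiescent. Let σ = σ₁ ++ … ++ σ_k be a legal quiescent run in which each σ_i is non-empty, legal, and end-to-end quiescent, and let σ^δ = [δ] ++ σ₁ ++ [δ] ++ … ++ [δ] ++ σ_k ++ [δ]. Then the following are equivalent: (1) there exist runs σ'₁, …, σ'_k with π_p(σ'_i) = π_p(σ_i) for every process p and each 1 ≤ i ≤ k such that σ'₁ ++ … ++ σ'_k ∈ L_S (σ is allowed by L_S under quiescent sequential consistency); (2) there exists w ∈ S_δ with w ≈ σ^δ; (3) σ^δ ∈ 𝓛_R(S_δ). -/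

import Mathlib

variable {Op Proc : Type*}

abbrev Ev (Op Proc : Type*) := Op × Proc × Bool

def IsInv (e : Ev Op Proc) : Prop := e.2.2 = true

def EvMatches (e e' : Ev Op Proc) : Prop :=
  e.1 = e'.1 ∧ e.2.1 = e'.2.1 ∧ e.2.2 = true ∧ e'.2.2 = false

def proj [DecidableEq Proc] (p : Proc) (σ : List (Ev Op Proc)) : List (Ev Op Proc) :=
  σ.filter (fun e => e.2.1 = p)

def SequentialRun (σ : List (Ev Op Proc)) : Prop :=
  σ = [] ∨
    ((∃ h : 0 < σ.length, IsInv (σ[0]'h)) ∧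
     (∀ i, i % 2 = 0 → ∀ h : i + 1 < σ.length,
        EvMatches (σ[i]'(Nat.lt_of_succ_lt h)) (σ[i+1]'h)) ∧
     ((σ.length - 1) % 2 = 0 →
        ∃ h : σ.length - 1 < σ.length, IsInv (σ[σ.length - 1]'h)))

def Legal [DecidableEq Proc] (σ : List (Ev Op Proc)) : Prop :=
  ∀ p : Proc, SequentialRun (proj p σ)

def Quiescent (σ : List (Ev Op Proc)) : Prop :=
  ∀ σ₁ (e : Ev Op Proc) σ₂, σ = σ₁ ++ e :: σ₂ → IsInv e → ∃ e' ∈ σ₂, EvMatches e e'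

def ETEQ (σ : List (Ev Op Proc)) : Prop :=
  Quiescent σ ∧ ∀ u, u <+: σ → u ≠ [] → u ≠ σ → ¬ Quiescent u

/-- The alphabet Σ_δ: events together with a fresh quiescence symbol δ. -/
abbrev EvD (Op Proc : Type*) := Ev Op Proc ⊕ Unit

/-- The quiescence symbol δ. -/
def dd : EvD Op Proc := Sum.inr ()

/-- π_Σ: remove all occurrences of δ. -/
def piSigma (w : List (EvD Op Proc)) : List (Ev Op Proc) :=
  w.filterMap Sum.getLeft?

/-- S_δ: the words over Σ_δ whose δ-erasure is in L_S and all of whose prefixes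
ending in δ have quiescent δ-erasure. -/
def Sdelta (L_S : Set (List (Ev Op Proc))) : Set (List (EvD Op Proc)) :=
  {w | piSigma w ∈ L_S ∧ ∀ u : List (EvD Op Proc), u ++ [dd] <+: w → Quiescent (piSigma u)}

/-- One swap of two adjacent letters related by the independence relation I. -/
inductive SwapStep {A : Type*} (I : A → A → Prop) : List A → List A → Prop
  | swap (u v : List A) (a b : A) : I a b → SwapStep I (u ++ a :: b :: v) (u ++ b :: a :: v)

/-- The universal independence relation on Σ_δ: any two events from Σ commute. -/
def IndepU (x y : EvD Op Proc) : Prop :=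
  ∃ a b : Ev Op Proc, x = Sum.inl a ∧ y = Sum.inl b

/-- 𝓛_U(L): closure of L under swaps of adjacent Σ-letters. -/
def LU (L : Set (List (EvD Op Proc))) : Set (List (EvD Op Proc)) :=
  {w' | ∃ w ∈ L, Relation.ReflTransGen (SwapStep (IndepU (Op := Op) (Proc := Proc))) w w'}

/-- The word [δ] ++ σ₁ ++ [δ] ++ σ₂ ++ [δ] ++ … ++ [δ] ++ σ_k ++ [δ]. -/
def sigmaDelta (L : List (List (Ev Op Proc))) : List (EvD Op Proc) :=
  [dd] ++ List.intercalate [dd] (L.map (List.map Sum.inl)) ++ [dd]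

/-- π_p^δ: keep all δ's and the events of process p. -/
def projD [DecidableEq Proc] (p : Proc) (w : List (EvD Op Proc)) : List (EvD Op Proc) :=
  w.filter (fun x => Sum.elim (fun e : Ev Op Proc => decide (e.2.1 = p)) (fun _ => true) x)

/-- w ≈ w' iff π_p^δ(w) = π_p^δ(w') for every process p. -/
def ApproxD [DecidableEq Proc] (w w' : List (EvD Op Proc)) : Prop :=
  ∀ p : Proc, projD p w = projD p w'

/-- The independence relation R on Σ_δ: two Σ-events commute iff their processes differ. -/
def IndepRD (x y : EvD Op Proc) : Prop :=
  ∃ a b : Ev Op Proc, x = Sum.inl a ∧ y = Sum.inl b ∧ a.2.1 ≠ b.2.1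

/-- 𝓛_R(L): closure of L under swaps of adjacent Σ-letters with distinct processes. -/
def LR (L : Set (List (EvD Op Proc))) : Set (List (EvD Op Proc)) :=
  {w' | ∃ w ∈ L, Relation.ReflTransGen (SwapStep (IndepRD (Op := Op) (Proc := Proc))) w w'}

section Aux
set_option linter.unusedSectionVars false
variable [DecidableEq Proc]

/-- Filter decomposition. -/
theorem filter_eq_append_cons {α : Type*} (q : α → Bool) :
    ∀ (l a : List α) (x : α) (b : List α), l.filter q = a ++ x :: b →
      ∃ a' b', l = a' ++ x :: b' ∧ a'.filter q = a ∧ b'.filter q = b := by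
  intro l
  induction l with
  | nil => intro a x b h; simp at h
  | cons c t ih =>
    intro a x b h
    by_cases hc : q c
    · rw [List.filter_cons_of_pos hc] at h
      cases a with
      | nil =>
        simp at h
        exact ⟨[], t, by simp [h.1], rfl, h.2⟩
      | cons a0 a1 =>
        simp at h
        obtain ⟨a', b', rfl, h1, h2⟩ := ih a1 x b h.2
        subst h1; exact ⟨c :: a', b', rfl, by rw [List.filter_cons_of_pos hc, h.1], h2⟩
    · rw [List.filter_cons_of_neg hc] at h
      obtain ⟨a', b', rfl, h1, h2⟩ := ih a x b h
      exact ⟨c :: a', b', rfl, by simp [List.filter_cons_of_neg hc, h1], h2⟩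

/-- Split a word over Σ_δ at the δ's. -/
def splitD : List (EvD Op Proc) → List (List (Ev Op Proc))
  | [] => [[]]
  | Sum.inr _ :: t => [] :: splitD t
  | Sum.inl a :: t =>
    match splitD t with
    | [] => [[a]]
    | s :: r => (a :: s) :: r

theorem splitD_ne_nil : ∀ w : List (EvD Op Proc), splitD w ≠ []
  | [] => by simp [splitD]
  | Sum.inr _ :: t => by simp [splitD]
  | Sum.inl a :: t => by
      unfold splitD
      cases h : splitD t <;> simp

theorem splitD_dd_cons (w : List (EvD Op Proc)) :
    splitD (dd :: w) = [] :: splitD w := rfl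

theorem splitD_inl_cons (a : Ev Op Proc) (w : List (EvD Op Proc)) (s : List (Ev Op Proc))
    (r : List (List (Ev Op Proc))) (h : splitD w = s :: r) :
    splitD (Sum.inl a :: w) = (a :: s) :: r := by
  unfold splitD; rw [h]

theorem splitD_mapinl_append (l : List (Ev Op Proc)) (w : List (EvD Op Proc))
    (s : List (Ev Op Proc)) (r : List (List (Ev Op Proc))) (h : splitD w = s :: r) :
    splitD (l.map Sum.inl ++ w) = (l ++ s) :: r := by
  induction l with
  | nil => simpa using h
  | cons a t ih => simpa using splitD_inl_cons a _ _ _ ih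

/-- Rejoin segments with δ's in between (no outer δ's). -/
def joinD : List (List (Ev Op Proc)) → List (EvD Op Proc)
  | [] => []
  | [s] => s.map Sum.inl
  | s :: r => s.map Sum.inl ++ dd :: joinD r

theorem joinD_cons_cons (s : List (Ev Op Proc)) (s' : List (Ev Op Proc))
    (r : List (List (Ev Op Proc))) :
    joinD (s :: s' :: r) = s.map Sum.inl ++ dd :: joinD (s' :: r) := rfl

theorem joinD_cons (a : Ev Op Proc) (s : List (Ev Op Proc)) (r : List (List (Ev Op Proc))) :
    joinD ((a :: s) :: r) = Sum.inl a :: joinD (s :: r) := by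
  cases r with
  | nil => simp [joinD]
  | cons s' r' => simp [joinD_cons_cons]

theorem joinD_splitD : ∀ w : List (EvD Op Proc), joinD (splitD w) = w
  | [] => by simp [splitD, joinD]
  | Sum.inr u :: t => by
      rw [show (Sum.inr u : EvD Op Proc) = dd by cases u; rfl, splitD_dd_cons]
      cases h : splitD t with
      | nil => exact absurd h (splitD_ne_nil t)
      | cons s r =>
        rw [joinD_cons_cons]
        have := joinD_splitD t
        rw [h] at this
        simp [this]
  | Sum.inl a :: t => by
      cases h : splitD t with
      | nil => exact absurd h (splitD_ne_nil t)
      | cons s r =>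
        rw [splitD_inl_cons a t s r h, joinD_cons]
        have := joinD_splitD t
        rw [h] at this
        rw [this]

theorem piSigma_mapinl (s : List (Ev Op Proc)) : piSigma (s.map Sum.inl) = s := by
  induction s with
  | nil => rfl
  | cons a t ih => simpa [piSigma] using ih

theorem piSigma_joinD : ∀ S : List (List (Ev Op Proc)), piSigma (joinD S) = S.flatten
  | [] => rfl
  | [s] => by simpa [joinD] using piSigma_mapinl s
  | s :: s' :: r => by
      have h1 := piSigma_joinD (s' :: r)
      have h2 := piSigma_mapinl (Op := Op) (Proc := Proc) s
      simp only [joinD_cons_cons, piSigma, List.filterMap_append, List.filterMap_cons] at h1 h2 ⊢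
      simp [piSigma] at h1 h2 ⊢
      rw [h2, show Sum.getLeft? (dd (Op := Op) (Proc := Proc)) = none from rfl]
      simp [h1]

theorem piSigma_eq_flatten_splitD (w : List (EvD Op Proc)) :
    piSigma w = (splitD w).flatten := by
  conv_lhs => rw [← joinD_splitD w]
  exact piSigma_joinD _

end Aux

section Aux2
set_option linter.unusedSectionVars false
variable [DecidableEq Proc]

theorem proj_nil (p : Proc) : proj p ([] : List (Ev Op Proc)) = [] := rfl

theorem proj_cons_pos (p : Proc) (a : Ev Op Proc) (s : List (Ev Op Proc)) (h : a.2.1 = p) :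
    proj p (a :: s) = a :: proj p s := by
  simp [proj, List.filter_cons, h]

theorem proj_cons_neg (p : Proc) (a : Ev Op Proc) (s : List (Ev Op Proc)) (h : a.2.1 ≠ p) :
    proj p (a :: s) = proj p s := by
  simp [proj, List.filter_cons, h]

theorem proj_append (p : Proc) (s t : List (Ev Op Proc)) :
    proj p (s ++ t) = proj p s ++ proj p t := List.filter_append _ _

theorem projD_dd_cons (p : Proc) (w : List (EvD Op Proc)) :
    projD p (dd :: w) = dd :: projD p w := by
  simp [projD, List.filter_cons, dd]

theorem projD_inl_cons_pos (p : Proc) (a : Ev Op Proc) (w : List (EvD Op Proc))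
    (h : a.2.1 = p) : projD p (Sum.inl a :: w) = Sum.inl a :: projD p w := by
  simp [projD, List.filter_cons, h]

theorem projD_inl_cons_neg (p : Proc) (a : Ev Op Proc) (w : List (EvD Op Proc))
    (h : a.2.1 ≠ p) : projD p (Sum.inl a :: w) = projD p w := by
  simp [projD, List.filter_cons, h]

theorem projD_append (p : Proc) (s t : List (EvD Op Proc)) :
    projD p (s ++ t) = projD p s ++ projD p t := List.filter_append _ _

theorem splitD_projD (p : Proc) : ∀ w : List (EvD Op Proc),
    splitD (projD p w) = (splitD w).map (proj p)
  | [] => by simp [splitD, projD, proj]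
  | Sum.inr u :: t => by
      have : (Sum.inr u : EvD Op Proc) = dd := by cases u; rfl
      rw [this, projD_dd_cons, splitD_dd_cons, splitD_dd_cons, List.map_cons,
        splitD_projD p t, proj_nil]
  | Sum.inl a :: t => by
      cases h : splitD t with
      | nil => exact absurd h (splitD_ne_nil t)
      | cons s r =>
        have ih := splitD_projD p t
        rw [h, List.map_cons] at ih
        by_cases hp : a.2.1 = p
        · rw [projD_inl_cons_pos p a t hp, splitD_inl_cons a t s r h,
            splitD_inl_cons _ _ _ _ ih, List.map_cons, proj_cons_pos p a s hp]
        · rw [projD_inl_cons_neg p a t hp, splitD_inl_cons a t s r h, ih, List.map_cons,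
            proj_cons_neg p a s hp]

theorem intercalate_cons_cons {α : Type*} (sep x y : List α) (ys : List (List α)) :
    List.intercalate sep (x :: y :: ys) = x ++ sep ++ List.intercalate sep (y :: ys) := by
  simp [List.intercalate]

theorem intercalate_single {α : Type*} (sep x : List α) :
    List.intercalate sep [x] = x := by simp [List.intercalate]

theorem sigmaDelta_nil : sigmaDelta ([] : List (List (Ev Op Proc))) = [dd, dd] := by
  simp [sigmaDelta, List.intercalate]

theorem splitD_intercalate : ∀ (m : List (Ev Op Proc)) (M : List (List (Ev Op Proc))),
    splitD (List.intercalate [dd] ((m :: M).map (List.map Sum.inl)) ++ [dd])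
      = (m :: M) ++ [[]]
  | m, [] => by
      rw [List.map_cons, List.map_nil, intercalate_single]
      have h1 : splitD ([dd] : List (EvD Op Proc)) = [[], []] := rfl
      rw [splitD_mapinl_append m [dd] [] [[]] h1]
      simp
  | m, m' :: M' => by
      have ih := splitD_intercalate m' M'
      simp only [List.map_cons]; rw [intercalate_cons_cons]
      have h2 : splitD (dd :: (List.intercalate [dd] ((m' :: M').map (List.map Sum.inl)) ++ [dd]))
          = [] :: ((m' :: M') ++ [[]]) := by rw [splitD_dd_cons, ih]
      calc splitD ((m.map Sum.inl ++ [dd] ++ List.intercalate [dd] ((m' :: M').map (List.map Sum.inl))) ++ [dd])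
          = splitD (m.map Sum.inl ++ (dd :: (List.intercalate [dd] ((m' :: M').map (List.map Sum.inl)) ++ [dd]))) := by
            congr 1; simp
        _ = (m ++ []) :: ((m' :: M') ++ [[]]) := splitD_mapinl_append _ _ _ _ h2
        _ = (m :: m' :: M') ++ [[]] := by simp

theorem splitD_sigmaDelta (m : List (Ev Op Proc)) (M : List (List (Ev Op Proc))) :
    splitD (sigmaDelta (m :: M)) = [] :: ((m :: M) ++ [[]]) := by
  have : sigmaDelta (m :: M)
      = dd :: (List.intercalate [dd] ((m :: M).map (List.map Sum.inl)) ++ [dd]) := by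
    simp [sigmaDelta]
  rw [this, splitD_dd_cons, splitD_intercalate]

end Aux2

section Aux3
set_option linter.unusedSectionVars false
variable [DecidableEq Proc]

theorem quiescent_nil : Quiescent ([] : List (Ev Op Proc)) := by
  intro σ₁ e σ₂ h
  exact absurd h (by simp)

theorem quiescent_append {s t : List (Ev Op Proc)} (hs : Quiescent s) (ht : Quiescent t) :
    Quiescent (s ++ t) := by
  intro σ₁ e σ₂ h hinv
  rcases List.append_eq_append_iff.1 h with ⟨a', ha1, ha2⟩ | ⟨c', hc1, hc2⟩
  · -- σ₁ = s ++ a', t = a' ++ e :: σ₂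
    exact ht a' e σ₂ ha2 hinv
  · -- s = σ₁ ++ c', e :: σ₂ = c' ++ t
    cases c' with
    | nil => exact ht [] e σ₂ (by simpa using hc2.symm) hinv
    | cons x c'' =>
      have hx : x = e := by simpa using congrArg (fun l => l.head?) hc2.symm
      subst hx
      have hσ₂ : σ₂ = c'' ++ t := by
        have := congrArg (fun l => l.tail) hc2.symm; simpa using this.symm
      obtain ⟨e', he1, he2⟩ := hs σ₁ x c'' hc1 hinv
      exact ⟨e', by simp [hσ₂, he1], he2⟩

theorem quiescent_proj {σ : List (Ev Op Proc)} (h : Quiescent σ) (p : Proc) :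
    Quiescent (proj p σ) := by
  intro σ₁ e σ₂ hdec hinv
  obtain ⟨a', b', rfl, h1, h2⟩ := filter_eq_append_cons _ σ σ₁ e σ₂ hdec
  obtain ⟨e', he1, he2⟩ := h a' e b' rfl hinv
  have hep : e.2.1 = p := by
    have : e ∈ proj p (a' ++ e :: b') := by rw [hdec]; simp
    simpa [proj] using (List.mem_filter.1 this).2
  refine ⟨e', ?_, he2⟩
  rw [← h2]
  exact List.mem_filter.2 ⟨he1, by simp [← he2.2.1, hep]⟩

theorem quiescent_of_proj {σ : List (Ev Op Proc)} (h : ∀ p, Quiescent (proj p σ)) :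
    Quiescent σ := by
  intro σ₁ e σ₂ hdec hinv
  set p := e.2.1
  have hp : proj p σ = proj p σ₁ ++ e :: proj p σ₂ := by
    rw [hdec, proj_append, proj_cons_pos p e σ₂ rfl]
  obtain ⟨e', he1, he2⟩ := h p _ e _ hp hinv
  exact ⟨e', (List.mem_filter.1 he1).1, he2⟩

theorem quiescent_flatten {S : List (List (Ev Op Proc))} (h : ∀ s ∈ S, Quiescent s) :
    Quiescent S.flatten := by
  induction S with
  | nil => exact quiescent_nil
  | cons s r ih =>
    rw [List.flatten_cons]
    exact quiescent_append (h s (by simp)) (ih fun t ht => h t (by simp [ht]))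

theorem flatten_take_pad (j : ℕ) (A : List (List (Ev Op Proc))) :
    ((A ++ [[]]).take j).flatten = (A.take j).flatten := by
  induction A generalizing j with
  | nil => cases j <;> simp
  | cons a r ih =>
    cases j with
    | zero => simp
    | succ j' => simp [ih j']

/-- A prefix of `w` ending just before a δ erases to the flatten of an initial
chunk of segments. -/
theorem piSigma_prefix_dd : ∀ (w u : List (EvD Op Proc)), u ++ [dd] <+: w →
    piSigma u = ((splitD w).take ((u.countP Sum.isRight) + 1)).flatten
  | [], u, h => by
      have := h.length_le; simp at this
  | Sum.inr y :: t, u, h => by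
      cases y
      cases u with
      | nil => simp [piSigma, splitD]
      | cons x u' =>
        have hx : (Sum.inr () : EvD Op Proc) = x := by
          obtain ⟨r, hr⟩ := h; simpa using congrArg (fun l => l.head?) hr.symm
        subst hx
        have h' : u' ++ [dd] <+: t := by
          obtain ⟨r, hr⟩ := h
          exact ⟨r, by simpa using hr⟩
        have ih := piSigma_prefix_dd t u' h'
        show piSigma (dd :: u')
            = ((splitD (dd :: t)).take
                (((dd :: u' : List (EvD Op Proc)).countP Sum.isRight) + 1)).flatten
        rw [splitD_dd_cons]
        have hc : ((dd :: u' : List (EvD Op Proc)).countP Sum.isRight)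
            = u'.countP Sum.isRight + 1 := by simp [List.countP_cons, dd]
        have hps : piSigma (dd :: u') = piSigma u' := by simp [piSigma, dd]; rfl
        rw [hc, hps, ih]
        simp
  | Sum.inl a :: t, u, h => by
      cases u with
      | nil =>
        obtain ⟨r, hr⟩ := h
        exact absurd (congrArg (fun l => l.head?) hr.symm) (by simp [dd])
      | cons x u' =>
        have hx : (Sum.inl a : EvD Op Proc) = x := by
          obtain ⟨r, hr⟩ := h; simpa using congrArg (fun l => l.head?) hr.symm
        subst hx
        have h' : u' ++ [dd] <+: t := by
          obtain ⟨r, hr⟩ := h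
          exact ⟨r, by simpa using hr⟩
        have ih := piSigma_prefix_dd t u' h'
        cases hs : splitD t with
        | nil => exact absurd hs (splitD_ne_nil t)
        | cons s r =>
          rw [splitD_inl_cons a t s r hs]
          have hc : ((Sum.inl a :: u' : List (EvD Op Proc)).countP Sum.isRight)
              = u'.countP Sum.isRight := by simp [List.countP_cons]
          rw [hc]
          have hps : piSigma (Sum.inl a :: u') = a :: piSigma u' := by simp [piSigma]
          rw [hps, ih, hs]
          simp

theorem eq_nil_of_proj_nil {u : List (Ev Op Proc)} (h : ∀ p, proj p u = []) : u = [] := by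
  cases u with
  | nil => rfl
  | cons e t =>
    have : e ∈ proj e.2.1 (e :: t) := List.mem_filter.2 ⟨by simp, by simp⟩
    rw [h e.2.1] at this
    simp at this

theorem forall2_of_maps : ∀ (A B : List (List (Ev Op Proc))), A.length = B.length →
    (∀ p : Proc, A.map (proj p) = B.map (proj p)) →
    List.Forall₂ (fun u' u => ∀ p : Proc, proj p u' = proj p u) A B
  | [], [], _, _ => List.Forall₂.nil
  | a :: A', b :: B', hl, hm =>
      List.Forall₂.cons
        (fun p => by
          have := hm p; simp only [List.map_cons, List.cons.injEq] at this; exact this.1)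
        (forall2_of_maps A' B' (by simpa using hl) fun p => by
          have := hm p; simp only [List.map_cons, List.cons.injEq] at this; exact this.2)

theorem maps_of_forall2 {A B : List (List (Ev Op Proc))}
    (h : List.Forall₂ (fun u' u => ∀ p : Proc, proj p u' = proj p u) A B) (p : Proc) :
    A.map (proj p) = B.map (proj p) := by
  induction h with
  | nil => rfl
  | cons h1 _ ih => simp [h1 p, ih]

theorem forall2_mem {A B : List (List (Ev Op Proc))}
    (h : List.Forall₂ (fun u' u => ∀ p : Proc, proj p u' = proj p u) A B)
    {a : List (Ev Op Proc)} (ha : a ∈ A) : ∃ b ∈ B, ∀ p : Proc, proj p a = proj p b := by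
  induction h with
  | nil => simp at ha
  | cons h1 h2 ih =>
    rcases List.mem_cons.1 ha with rfl | ha'
    · exact ⟨_, by simp, h1⟩
    · obtain ⟨b, hb1, hb2⟩ := ih ha'
      exact ⟨b, by simp [hb1], hb2⟩

end Aux3

section Aux4
set_option linter.unusedSectionVars false
variable [DecidableEq Proc]

theorem indepRD_symm : ∀ {x y : EvD Op Proc}, IndepRD x y → IndepRD y x := by
  rintro x y ⟨a, b, rfl, rfl, hab⟩
  exact ⟨b, a, rfl, rfl, fun h => hab h.symm⟩

theorem swapStep_symm {A : Type*} {I : A → A → Prop} (hI : ∀ {x y}, I x y → I y x)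
    {w w' : List A} (h : SwapStep I w w') : SwapStep I w' w := by
  cases h with
  | swap u v a b hab => exact SwapStep.swap u v b a (hI hab)

theorem swapStep_cons {A : Type*} {I : A → A → Prop} {w w' : List A} (c : A)
    (h : SwapStep I w w') : SwapStep I (c :: w) (c :: w') := by
  cases h with
  | swap u v a b hab =>
    have := SwapStep.swap (I := I) (c :: u) v a b hab
    simpa using this

theorem rtg_cons {A : Type*} {I : A → A → Prop} {w w' : List A} (c : A)
    (h : Relation.ReflTransGen (SwapStep I) w w') :
    Relation.ReflTransGen (SwapStep I) (c :: w) (c :: w') := by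
  induction h with
  | refl => exact Relation.ReflTransGen.refl
  | tail _ h2 ih => exact ih.tail (swapStep_cons c h2)

theorem rtg_swap_symm {A : Type*} {I : A → A → Prop} (hI : ∀ {x y}, I x y → I y x)
    {w w' : List A} (h : Relation.ReflTransGen (SwapStep I) w w') :
    Relation.ReflTransGen (SwapStep I) w' w := by
  induction h with
  | refl => exact Relation.ReflTransGen.refl
  | tail _ h2 ih =>
      exact (Relation.ReflTransGen.single (swapStep_symm hI h2)).trans ih

theorem rtg_bubble {A : Type*} {I : A → A → Prop} (a : A) :
    ∀ (u v : List A), (∀ b ∈ u, I a b) →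
      Relation.ReflTransGen (SwapStep I) (a :: (u ++ v)) (u ++ a :: v)
  | [], v, _ => Relation.ReflTransGen.refl
  | c :: u', v, h => by
      have step : SwapStep I (a :: c :: (u' ++ v)) (c :: a :: (u' ++ v)) := by
        have := SwapStep.swap (I := I) [] (u' ++ v) a c (h c (by simp))
        simpa using this
      refine Relation.ReflTransGen.trans (Relation.ReflTransGen.single (by simpa using step)) ?_
      have := rtg_cons c (rtg_bubble a u' v fun b hb => h b (by simp [hb]))
      simpa using this

theorem swapStep_projD {w w' : List (EvD Op Proc)}
    (h : SwapStep (IndepRD (Op := Op) (Proc := Proc)) w w') (p : Proc) :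
    projD p w = projD p w' := by
  cases h with
  | swap u v a b hab =>
    obtain ⟨x, y, rfl, rfl, hxy⟩ := hab
    by_cases hx : x.2.1 = p
    · have hy : y.2.1 ≠ p := fun hy => hxy (hx.trans hy.symm)
      simp [projD, List.filter_append, List.filter_cons, hx, hy]
    · by_cases hy : y.2.1 = p <;>
        simp [projD, List.filter_append, List.filter_cons, hx, hy]

theorem rtg_projD {w w' : List (EvD Op Proc)}
    (h : Relation.ReflTransGen (SwapStep (IndepRD (Op := Op) (Proc := Proc))) w w')
    (p : Proc) : projD p w = projD p w' := by
  induction h with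
  | refl => rfl
  | tail _ h2 ih => exact ih.trans (swapStep_projD h2 p)

theorem approx_nil [Nonempty Proc] {w' : List (EvD Op Proc)}
    (h : ApproxD ([] : List (EvD Op Proc)) w') : w' = [] := by
  cases w' with
  | nil => rfl
  | cons x t =>
    exfalso
    cases x with
    | inl y =>
      have := h y.2.1
      rw [projD_inl_cons_pos _ y t rfl] at this
      exact absurd this.symm (by simp [projD])
    | inr u =>
      cases u
      have := h (Classical.arbitrary Proc)
      rw [show (Sum.inr () : EvD Op Proc) = dd from rfl, projD_dd_cons] at this
      exact absurd this.symm (by simp [projD])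

theorem approx_to_rtg [Nonempty Proc] : ∀ (w w' : List (EvD Op Proc)), ApproxD w w' →
    Relation.ReflTransGen (SwapStep (IndepRD (Op := Op) (Proc := Proc))) w w'
  | [], w', h => by rw [approx_nil h]
  | Sum.inl x :: t, w', h => by
      set p := x.2.1 with hp
      have hP := h p
      rw [projD_inl_cons_pos p x t rfl] at hP
      obtain ⟨u, v, rfl, hu, hv⟩ :=
        filter_eq_append_cons _ w' [] (Sum.inl x) (projD p t) hP.symm
      have hu' : ∀ b ∈ u, IndepRD (Sum.inl x : EvD Op Proc) b := by
        intro b hb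
        have hbf := List.filter_eq_nil_iff.1 hu b hb
        cases b with
        | inl y =>
          refine ⟨x, y, rfl, rfl, ?_⟩
          intro hcon
          exact hbf (by simp [← hp, ← hcon])
        | inr z => exact absurd (by simp) hbf
      have happrox : ApproxD t (u ++ v) := by
        intro q
        have hq := h q
        by_cases hxq : x.2.1 = q
        · have hqp : q = p := by rw [hp, hxq]
          have hunil : projD q u = [] := by rw [hqp]; exact hu
          rw [projD_inl_cons_pos q x t hxq, projD_append, hunil,
            projD_inl_cons_pos q x v hxq] at hq
          simp only [List.nil_append, List.cons.injEq, true_and] at hq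
          rw [projD_append, hunil, List.nil_append]
          exact hq
        · rw [projD_inl_cons_neg q x t hxq, projD_append,
            projD_inl_cons_neg q x v hxq] at hq
          rw [projD_append]
          exact hq
      have ih := approx_to_rtg t (u ++ v) happrox
      have h1 : Relation.ReflTransGen (SwapStep (IndepRD (Op := Op) (Proc := Proc)))
          (Sum.inl x :: t) (Sum.inl x :: (u ++ v)) := rtg_cons _ ih
      have h2 := rtg_bubble (I := IndepRD (Op := Op) (Proc := Proc)) (Sum.inl x) u v hu'
      exact h1.trans h2
  | Sum.inr z :: t, w', h => by
      cases z
      have hP := h (Classical.arbitrary Proc)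
      set p := Classical.arbitrary Proc
      rw [show (Sum.inr () : EvD Op Proc) = dd from rfl, projD_dd_cons] at hP
      obtain ⟨u, v, hw', hu, hv⟩ :=
        filter_eq_append_cons _ w' [] dd (projD p t) hP.symm
      have hunil : u = [] := by
        cases u with
        | nil => rfl
        | cons b u₀ =>
          exfalso
          have hbf := List.filter_eq_nil_iff.1 hu b (by simp)
          cases b with
          | inl y =>
            have := h y.2.1
            rw [show (Sum.inr () : EvD Op Proc) = dd from rfl, projD_dd_cons, hw'] at this
            rw [show ((Sum.inl y :: u₀ : List (EvD Op Proc)) ++ dd :: v)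
                = Sum.inl y :: (u₀ ++ dd :: v) from rfl,
              projD_inl_cons_pos _ y _ rfl] at this
            simp only [List.cons.injEq] at this
            exact (by simp [dd] : (dd : EvD Op Proc) ≠ Sum.inl y) this.1
          | inr z' => exact hbf (by simp)
      subst hunil
      simp only [List.nil_append] at hw'
      subst hw'
      have happrox : ApproxD t v := by
        intro q
        have := h q
        rw [show (Sum.inr () : EvD Op Proc) = dd from rfl, projD_dd_cons, projD_dd_cons] at this
        simp only [List.cons.injEq, true_and] at this
        exact this
      exact rtg_cons _ (approx_to_rtg t v happrox)

end Aux4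

section Aux5
set_option linter.unusedSectionVars false
variable [DecidableEq Proc]

theorem splitD_sigmaDelta_nil :
    splitD (sigmaDelta ([] : List (List (Ev Op Proc)))) = [[], [], []] := by
  rw [sigmaDelta_nil]; rfl

theorem piSigma_sigmaDelta (M : List (List (Ev Op Proc))) :
    piSigma (sigmaDelta M) = M.flatten := by
  cases M with
  | nil => rw [piSigma_eq_flatten_splitD, splitD_sigmaDelta_nil]; rfl
  | cons m M' => rw [piSigma_eq_flatten_splitD, splitD_sigmaDelta]; simp

theorem projD_sigmaDelta_eq {L' L : List (List (Ev Op Proc))}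
    (hlen : L'.length = L.length)
    (hm : ∀ p : Proc, L'.map (proj p) = L.map (proj p)) :
    ApproxD (sigmaDelta L') (sigmaDelta L) := by
  intro p
  have key : splitD (projD p (sigmaDelta L')) = splitD (projD p (sigmaDelta L)) := by
    rw [splitD_projD, splitD_projD]
    cases L with
    | nil =>
      rw [List.length_nil, List.length_eq_zero_iff] at hlen
      rw [hlen]
    | cons l L₀ =>
      cases L' with
      | nil => simp at hlen
      | cons l' L₀' =>
        rw [splitD_sigmaDelta, splitD_sigmaDelta, List.map_cons, List.map_cons,
          List.map_append, List.map_append, hm p]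
  have := congrArg joinD key
  rwa [joinD_splitD, joinD_splitD] at this

end Aux5

/-- Membership for quiescent sequential consistency: σ is allowed by L_S under quiescent
sequential consistency iff some w ∈ S_δ satisfies w ≈ σ^δ, iff σ^δ ∈ 𝓛_R(S_δ). -/
theorem qsc_allowed_iff [DecidableEq Proc] [Nonempty Proc]
    (L_S : Set (List (Ev Op Proc)))
    (hLS : ∀ w ∈ L_S, SequentialRun w ∧ Quiescent w)
    (L : List (List (Ev Op Proc)))
    (hlegal : Legal L.flatten) (hquies : Quiescent L.flatten)
    (hpieces : ∀ u ∈ L, u ≠ [] ∧ Legal u ∧ ETEQ u) :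
    ((∃ L' : List (List (Ev Op Proc)),
        List.Forall₂ (fun u' u => ∀ p : Proc, proj p u' = proj p u) L' L ∧
        L'.flatten ∈ L_S) ↔
      (∃ w ∈ Sdelta L_S, ApproxD w (sigmaDelta L))) ∧
    ((∃ w ∈ Sdelta L_S, ApproxD w (sigmaDelta L)) ↔
      sigmaDelta L ∈ LR (Sdelta L_S)) := by
  constructor
  · -- part A
    constructor
    · rintro ⟨L', hf, hmem⟩
      refine ⟨sigmaDelta L', ⟨?_, ?_⟩, ?_⟩
      · rw [piSigma_sigmaDelta]; exact hmem
      · intro u hu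
        rw [piSigma_prefix_dd _ u hu]
        apply quiescent_flatten
        intro s hs
        have hs' : s ∈ splitD (sigmaDelta L') := List.mem_of_mem_take hs
        have hQ : ∀ s' ∈ L', Quiescent s' := by
          intro s' hmem'
          obtain ⟨b, hb1, hb2⟩ := forall2_mem hf hmem'
          have hQb : Quiescent b := ((hpieces b hb1).2.2).1
          exact quiescent_of_proj fun p => by rw [hb2 p]; exact quiescent_proj hQb p
        cases L' with
        | nil =>
          rw [splitD_sigmaDelta_nil] at hs'
          have : s = [] := by simpa using hs'
          rw [this]; exact quiescent_nil
        | cons m M =>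
          rw [splitD_sigmaDelta] at hs'
          rcases List.mem_cons.1 hs' with rfl | h2
          · exact quiescent_nil
          · rcases List.mem_append.1 h2 with h3 | h4
            · exact hQ s h3
            · have hse : s = [] := by simpa using h4
              rw [hse]; exact quiescent_nil
      · exact projD_sigmaDelta_eq (List.Forall₂.length_eq hf) (maps_of_forall2 hf)
    · rintro ⟨w, ⟨hw1, _⟩, happ⟩
      cases L with
      | nil =>
        refine ⟨[], List.Forall₂.nil, ?_⟩
        have hps : piSigma w = [] := by
          have hall : ∀ x ∈ w, Sum.getLeft? x = none := by
            intro x hx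
            cases x with
            | inr u => rfl
            | inl y =>
              exfalso
              have hmem : (Sum.inl y : EvD Op Proc) ∈ projD y.2.1 w :=
                List.mem_filter.2 ⟨hx, by simp⟩
              rw [happ y.2.1] at hmem
              rw [show projD y.2.1 (sigmaDelta ([] : List (List (Ev Op Proc)))) = [dd, dd] from
                by rw [sigmaDelta_nil]; rfl] at hmem
              simp [dd] at hmem
          exact List.filterMap_eq_nil_iff.mpr hall
        simpa using hps ▸ hw1
      | cons l L₀ =>
        have hsplit : ∀ p, (splitD w).map (proj p)
            = ([] :: ((l :: L₀) ++ [[]])).map (proj p) := by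
          intro p
          rw [← splitD_projD, happ p, splitD_projD, splitD_sigmaDelta]
        have hlen : (splitD w).length = L₀.length + 3 := by
          have := congrArg List.length (hsplit (Classical.arbitrary Proc))
          simpa using this
        obtain ⟨a, M, hS⟩ : ∃ a M, splitD w = a :: M := by
          cases hS : splitD w with
          | nil => exact absurd hS (splitD_ne_nil w)
          | cons a M => exact ⟨a, M, rfl⟩
        obtain ⟨M', b, hM⟩ : ∃ M' b, M = M' ++ [b] := by
          rcases List.eq_nil_or_concat M with rfl | ⟨M', b, hM⟩
          · exfalso
            rw [hS] at hlen
            simp only [List.length_cons, List.length_nil] at hlen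
            omega
          · exact ⟨M', b, by simpa using hM⟩
        subst hM
        have hlen' : M'.length = (l :: L₀).length := by
          rw [hS] at hlen
          simp only [List.length_cons, List.length_append, List.length_singleton, List.length_nil] at hlen
          simp only [List.length_cons]
          omega
        have key : ∀ p : Proc, proj p a = [] ∧ M'.map (proj p) = (l :: L₀).map (proj p)
            ∧ proj p b = [] := by
          intro p
          have hthis := hsplit p
          rw [hS] at hthis
          simp only [List.map_cons, List.map_append, List.map_nil, List.cons.injEq,
            proj_nil] at hthis
          obtain ⟨h1, h2⟩ := hthis
          obtain ⟨h3, h4⟩ := List.append_inj h2 (by simpa using hlen')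
          exact ⟨h1, h3, by simpa using h4⟩
        have ha : a = [] := eq_nil_of_proj_nil fun p => (key p).1
        have hb : b = [] := eq_nil_of_proj_nil fun p => (key p).2.2
        refine ⟨M', forall2_of_maps M' (l :: L₀) hlen' fun p => (key p).2.1, ?_⟩
        have hps : piSigma w = M'.flatten := by
          rw [piSigma_eq_flatten_splitD, hS, ha, hb]
          simp
        rwa [hps] at hw1
  · -- part B
    constructor
    · rintro ⟨w, hw, happ⟩
      exact ⟨w, hw, approx_to_rtg w _ happ⟩
    · rintro ⟨w, hw, hrtg⟩
      exact ⟨w, hw, fun p => rtg_projD hrtg p⟩
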